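/- Let k ≥ 1 and let x_1, …, x_k be real numbers satisfying: x_1 > 0; x_i ≥ 0 for all i ∈ {1, …, k}; and x_i ≤ 2·max_{j ∈ {1, …, i−1}} x_j for all i ∈ {2, …, k}. Then ∑_{i=1}^{⌈k/2⌉} 2^{-i}·x_i ≥ (1/2)·∑_{i=1}^{k} 2^{-i}·x_i. -/
import Mathlib

open Finset

private lemma sup'_set_congr {α β : Type*} [SemilatticeSup β] {s t : Finset α}
    (h : s = t) (hs : s.Nonempty) (ht : t.Nonempty) (f : α → β) :
    s.sup' hs f = t.sup' ht f := by subst h; rfl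

/-- For `k ≥ 1` and reals `x_1, …, x_k` with `x_1 > 0`, `x_i ≥ 0` for all
`i ∈ {1, …, k}`, and `x_i ≤ 2·max_{j ∈ {1, …, i−1}} x_j` for `i ∈ {2, …, k}`:
`∑_{i=1}^{⌈k/2⌉} 2^{-i}·x_i ≥ (1/2)·∑_{i=1}^{k} 2^{-i}·x_i`. -/
theorem stmt_11 (k : ℕ) (hk : 1 ≤ k) (x : ℕ → ℝ)
    (hx1 : 0 < x 1) (hx0 : ∀ i ∈ Finset.Icc 1 k, 0 ≤ x i)
    (hx2 : ∀ i, ∀ h2 : 2 ≤ i, i ≤ k →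
      x i ≤ 2 * (Finset.Icc 1 (i - 1)).sup' (Finset.nonempty_Icc.mpr (by omega)) x) :
    ∑ i ∈ Finset.Icc 1 ((k + 1) / 2), (2 : ℝ) ^ (-(i : ℤ)) * x i ≥
      (1 / 2) * ∑ i ∈ Finset.Icc 1 k, (2 : ℝ) ^ (-(i : ℤ)) * x i := by
  set m := (k + 1) / 2 with hmdef
  have hm1 : 1 ≤ m := by omega
  have hmk : m ≤ k := by omega
  have hkm : k - m ≤ m := by omega
  set M : ℕ → ℝ := fun n => (insert 1 (Icc 1 n)).sup' (insert_nonempty 1 _) x with hMdef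
  have hMx : ∀ n i, i = 1 ∨ (1 ≤ i ∧ i ≤ n) → x i ≤ M n := by
    intro n i hi
    apply le_sup'
    rcases hi with h | h
    · simp [h]
    · simp [mem_insert, mem_Icc]; omega
  have hMpos : ∀ n, 0 < M n := fun n => lt_of_lt_of_le hx1 (le_sup' x (mem_insert_self 1 _))
  have hx2' : ∀ i, 2 ≤ i → i ≤ k → x i ≤ 2 * M (i - 1) := by
    intro i h2 hik
    have he : Icc 1 (i - 1) = insert 1 (Icc 1 (i - 1)) :=
      (insert_eq_self.mpr (by simp [mem_Icc]; omega)).symm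
    have h := hx2 i h2 hik
    rwa [sup'_set_congr he (nonempty_Icc.mpr (by omega)) (insert_nonempty 1 _)] at h
  have hMub : ∀ n C, (∀ i, i = 1 ∨ (1 ≤ i ∧ i ≤ n) → x i ≤ C) → M n ≤ C := by
    intro n C hC
    apply sup'_le
    intro i hi
    apply hC
    simp [mem_insert, mem_Icc] at hi
    omega
  have hMsucc : ∀ n, 1 ≤ n → n + 1 ≤ k → M (n + 1) ≤ 2 * M n := by
    intro n hn hnk
    apply hMub
    intro i hi
    rcases hi with h | h
    · have := hMx n 1 (Or.inl rfl)
      have := hMpos n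
      subst h; linarith
    · rcases Nat.lt_or_ge i (n + 1) with hlt | hge
      · have := hMx n i (Or.inr ⟨h.1, by omega⟩)
        have := hMpos n
        linarith
      · have hi' : i = n + 1 := by omega
        subst hi'
        have := hx2' (n + 1) (by omega) hnk
        simpa using this
  have hMgeo : ∀ d, m + d ≤ k → M (m + d) ≤ 2 ^ d * M m := by
    intro d
    induction d with
    | zero => intro _; simp
    | succ d ih =>
      intro hd
      have h1 : M (m + d + 1) ≤ 2 * M (m + d) := hMsucc (m + d) (by omega) (by omega)
      have h2 : M (m + d) ≤ 2 ^ d * M m := ih (by omega)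
      calc M (m + (d + 1)) = M (m + d + 1) := by ring_nf
      _ ≤ 2 * M (m + d) := h1
      _ ≤ 2 * (2 ^ d * M m) := by linarith
      _ = 2 ^ (d + 1) * M m := by ring
  -- Claim B : head sum lower bound
  have hMmax : ∀ n, M (n + 1) ≤ max (M n) (x (n + 1)) := by
    intro n
    apply hMub
    intro i hi
    rcases hi with h | h
    · subst h; exact le_trans (hMx n 1 (Or.inl rfl)) (le_max_left _ _)
    · rcases Nat.lt_or_ge i (n + 1) with hlt | hge
      · exact le_trans (hMx n i (Or.inr ⟨h.1, by omega⟩)) (le_max_left _ _)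
      · have : i = n + 1 := by omega
        subst this
        exact le_max_right _ _
  have hM1 : M 1 = x 1 := by
    apply le_antisymm
    · apply hMub; intro i hi; have : i = 1 := by omega
      subst this; exact le_refl _
    · exact hMx 1 1 (Or.inl rfl)
  have claimB : ∀ n, 1 ≤ n → n ≤ k →
      (n : ℝ) * (2 : ℝ) ^ (-(n : ℤ)) * M n ≤ ∑ i ∈ Icc 1 n, (2 : ℝ) ^ (-(i : ℤ)) * x i := by
    intro n hn
    induction n, hn using Nat.le_induction with
    | base =>
      intro _
      rw [show Icc 1 1 = {1} from rfl, sum_singleton, hM1]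
      norm_num
    | succ n hn ih =>
      intro hnk
      rw [Finset.sum_Icc_succ_top (by omega : 1 ≤ n + 1)]
      have ihv := ih (by omega)
      have hA : ((n : ℝ) + 1) * M (n + 1) ≤ 2 * n * M n + x (n + 1) := by
        have hmax := hMmax n
        have hxd := hx2' (n + 1) (by omega) hnk
        have hx0' : 0 ≤ x (n + 1) := hx0 (n + 1) (mem_Icc.mpr ⟨by omega, hnk⟩)
        have hMn := hMpos n
        have hn1 : (1 : ℝ) ≤ n := by exact_mod_cast hn
        simp only [Nat.add_sub_cancel] at hxd
        rcases le_total (x (n + 1)) (M n) with hc | hc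
        · have : M (n + 1) ≤ M n := by
            have := hmax; rw [max_eq_left hc] at this; exact this
          nlinarith
        · have : M (n + 1) ≤ x (n + 1) := by
            have := hmax; rw [max_eq_right hc] at this; exact this
          nlinarith
      have hp : (0 : ℝ) < (2 : ℝ) ^ (-((n : ℤ) + 1)) := by positivity
      have hpe : (2 : ℝ) ^ (-(n : ℤ)) = 2 * (2 : ℝ) ^ (-((n : ℤ) + 1)) := by
        rw [show -(n : ℤ) = 1 + -((n : ℤ) + 1) by ring,
          zpow_add₀ (two_ne_zero : (2:ℝ) ≠ 0), zpow_one]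
      have hcast : (-(((n : ℕ) + 1 : ℕ) : ℤ)) = -((n : ℤ) + 1) := by push_cast; ring
      rw [hcast]
      have key : ((n : ℝ) + 1) * (2 : ℝ) ^ (-((n : ℤ) + 1)) * M (n + 1) ≤
          (n : ℝ) * (2 : ℝ) ^ (-(n : ℤ)) * M n + (2 : ℝ) ^ (-((n : ℤ) + 1)) * x (n + 1) := by
        rw [hpe]
        nlinarith [mul_le_mul_of_nonneg_left hA hp.le]
      push_cast
      push_cast at key
      linarith
  -- Claim C : tail terms are small
  have claimC : ∀ i ∈ Icc (m + 1) k, (2 : ℝ) ^ (-(i : ℤ)) * x i ≤ (2 : ℝ) ^ (-(m : ℤ)) * M m := by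
    intro i hi
    rw [mem_Icc] at hi
    obtain ⟨hi1, hi2⟩ := hi
    have hxd := hx2' i (by omega) hi2
    have hgeo := hMgeo (i - 1 - m) (by omega)
    rw [show m + (i - 1 - m) = i - 1 by omega] at hgeo
    have hpi : (0 : ℝ) < (2 : ℝ) ^ (-(i : ℤ)) := by positivity
    have hpow : (2 : ℝ) ^ (-(i : ℤ)) * (2 * 2 ^ (i - 1 - m : ℕ)) = (2 : ℝ) ^ (-(m : ℤ)) := by
      have h1 : (2 : ℝ) * 2 ^ (i - 1 - m : ℕ) = 2 ^ ((i - 1 - m : ℕ) + 1) := (pow_succ' 2 _).symm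
      rw [h1, ← zpow_natCast (2 : ℝ) ((i - 1 - m) + 1), ← zpow_add₀ (two_ne_zero : (2:ℝ) ≠ 0)]
      congr 1
      omega
    calc (2 : ℝ) ^ (-(i : ℤ)) * x i ≤ (2 : ℝ) ^ (-(i : ℤ)) * (2 * (2 ^ (i - 1 - m : ℕ) * M m)) := by
          apply mul_le_mul_of_nonneg_left _ hpi.le
          calc x i ≤ 2 * M (i - 1) := hxd
          _ ≤ 2 * (2 ^ (i - 1 - m : ℕ) * M m) := by linarith
    _ = (2 : ℝ) ^ (-(m : ℤ)) * M m := by rw [← hpow]; ring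
  -- assemble
  have hsplit : ∑ i ∈ Icc 1 k, (2 : ℝ) ^ (-(i : ℤ)) * x i =
      ∑ i ∈ Icc 1 m, (2 : ℝ) ^ (-(i : ℤ)) * x i + ∑ i ∈ Icc (m + 1) k, (2 : ℝ) ^ (-(i : ℤ)) * x i := by
    rw [show Icc 1 k = Ioc 0 k by rfl, show Icc 1 m = Ioc 0 m by rfl,
      show Icc (m + 1) k = Ioc m k from Finset.Icc_add_one_left_eq_Ioc m k]
    exact (Finset.sum_Ioc_consecutive _ (Nat.zero_le m) hmk).symm
  have htail : ∑ i ∈ Icc (m + 1) k, (2 : ℝ) ^ (-(i : ℤ)) * x i ≤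
      ((k - m : ℕ) : ℝ) * ((2 : ℝ) ^ (-(m : ℤ)) * M m) := by
    calc ∑ i ∈ Icc (m + 1) k, (2 : ℝ) ^ (-(i : ℤ)) * x i
        ≤ ∑ _i ∈ Icc (m + 1) k, (2 : ℝ) ^ (-(m : ℤ)) * M m := sum_le_sum claimC
    _ = ((k - m : ℕ) : ℝ) * ((2 : ℝ) ^ (-(m : ℤ)) * M m) := by
        rw [sum_const, Nat.card_Icc, nsmul_eq_mul]
        congr 2
        omega
  have hB := claimB m hm1 hmk
  have hcpos : (0 : ℝ) < (2 : ℝ) ^ (-(m : ℤ)) * M m := by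
    have := hMpos m; positivity
  have hcastle : ((k - m : ℕ) : ℝ) ≤ (m : ℝ) := by exact_mod_cast hkm
  have hT : ∑ i ∈ Icc (m + 1) k, (2 : ℝ) ^ (-(i : ℤ)) * x i ≤
      ∑ i ∈ Icc 1 m, (2 : ℝ) ^ (-(i : ℤ)) * x i := by
    calc ∑ i ∈ Icc (m + 1) k, (2 : ℝ) ^ (-(i : ℤ)) * x i
        ≤ ((k - m : ℕ) : ℝ) * ((2 : ℝ) ^ (-(m : ℤ)) * M m) := htail
    _ ≤ (m : ℝ) * ((2 : ℝ) ^ (-(m : ℤ)) * M m) := by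
        apply mul_le_mul_of_nonneg_right hcastle hcpos.le
    _ = (m : ℝ) * (2 : ℝ) ^ (-(m : ℤ)) * M m := by ring
    _ ≤ ∑ i ∈ Icc 1 m, (2 : ℝ) ^ (-(i : ℤ)) * x i := hB
  rw [ge_iff_le, hsplit]
  linarith
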